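/- For unit vectors u, v in C^n ⊗ C^m, the fidelity between the reduced states satisfies F(Tr_Y(uu*), Tr_Y(vv*)) = ‖Tr_X(vu*)‖₁, where Tr_Y is the partial trace over the second tensor factor and Tr_X is the partial trace over the first tensor factor. -/

import Mathlib

open Matrix Kronecker
open scoped ComplexOrder

/-- Positive semidefinite square root, as defined in Mathlib of December 2024. -/
noncomputable def Matrix.PosSemidef.sqrt {n 𝕜 : Type*} [Fintype n] [RCLike 𝕜] [DecidableEq n]
    {A : Matrix n n 𝕜} (hA : A.PosSemidef) : Matrix n n 𝕜 :=
  hA.1.eigenvectorUnitary.1 * diagonal ((↑) ∘ Real.sqrt ∘ hA.1.eigenvalues) *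
    (star hA.1.eigenvectorUnitary : Matrix n n 𝕜)

/-- Trace norm `‖A‖₁ = Tr √(Aᴴ A)` of a complex matrix. -/
noncomputable def traceNorm {α β : Type*} [Fintype α] [Fintype β] [DecidableEq α] [DecidableEq β]
    (A : Matrix α β ℂ) : ℝ :=
  ((Matrix.posSemidef_conjTranspose_mul_self A).sqrt.trace).re

/-- Spectral norm (operator norm w.r.t. Euclidean norms). -/
noncomputable def specNorm {α β : Type*} [Fintype α] [Fintype β] [DecidableEq α] [DecidableEq β]
    (A : Matrix α β ℂ) : ℝ :=
  ‖LinearMap.toContinuousLinearMap (Matrix.toEuclideanLin A)‖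

/-- Frobenius norm. -/
noncomputable def frobNorm {α β : Type*} [Fintype α] [Fintype β]
    (A : Matrix α β ℂ) : ℝ :=
  Real.sqrt ((Aᴴ * A).trace.re)

/-- Positive semidefinite square root (junk value `0` off the PSD cone). -/
noncomputable def msqrt {α : Type*} [Fintype α] [DecidableEq α]
    (P : Matrix α α ℂ) : Matrix α α ℂ :=
  open scoped Classical in
  if h : P.PosSemidef then h.sqrt else 0

/-- Fidelity `F(P,Q) = ‖√P √Q‖₁`. -/
noncomputable def fid {α : Type*} [Fintype α] [DecidableEq α]
    (P Q : Matrix α α ℂ) : ℝ :=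
  traceNorm (msqrt P * msqrt Q)

/-- Partial trace over the second (right) tensor factor. -/
noncomputable def ptraceRight {a b : ℕ} (M : Matrix (Fin a × Fin b) (Fin a × Fin b) ℂ) :
    Matrix (Fin a) (Fin a) ℂ :=
  Matrix.of fun i j => ∑ s : Fin b, M (i, s) (j, s)

/-- Partial trace over the first (left) tensor factor. -/
noncomputable def ptraceLeft {a b : ℕ} (M : Matrix (Fin a × Fin b) (Fin a × Fin b) ℂ) :
    Matrix (Fin b) (Fin b) ℂ :=
  Matrix.of fun i j => ∑ s : Fin a, M (s, i) (s, j)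

/-- `Φ ⊗ id` acting on `L(Cⁿ ⊗ Cᵏ)`. -/
noncomputable def tensorId {n m k : ℕ}
    (Φ : Matrix (Fin n) (Fin n) ℂ → Matrix (Fin m) (Fin m) ℂ)
    (M : Matrix (Fin n × Fin k) (Fin n × Fin k) ℂ) :
    Matrix (Fin m × Fin k) (Fin m × Fin k) ℂ :=
  Matrix.of fun p q => Φ (Matrix.of fun a c => M (a, p.2) (c, q.2)) p.1 q.1

/-- Completely bounded trace norm `¦¦¦Φ¦¦¦₁ = ‖Φ ⊗ id_{L(Cⁿ)}‖₁`. -/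
noncomputable def cbTraceNorm {n m : ℕ}
    (Φ : Matrix (Fin n) (Fin n) ℂ → Matrix (Fin m) (Fin m) ℂ) : ℝ :=
  sSup {c : ℝ | ∃ M : Matrix (Fin n × Fin n) (Fin n × Fin n) ℂ,
    traceNorm M ≤ 1 ∧ c = traceNorm (tensorId Φ M)}

/-- Completely bounded spectral norm of `Ψ : L(Cᵐ) → L(Cⁿ)`, with ancilla `Cⁿ`. -/
noncomputable def cbSpecNorm {m n : ℕ}
    (Ψ : Matrix (Fin m) (Fin m) ℂ → Matrix (Fin n) (Fin n) ℂ) : ℝ :=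
  sSup {c : ℝ | ∃ M : Matrix (Fin m × Fin n) (Fin m × Fin n) ℂ,
    specNorm M ≤ 1 ∧ c = specNorm (tensorId Ψ M)}

/-- Choi–Jamiołkowski representation `J(Φ) = ∑ᵢⱼ Φ(Eᵢⱼ) ⊗ Eᵢⱼ`. -/
noncomputable def choi {n m : ℕ}
    (Φ : Matrix (Fin n) (Fin n) ℂ → Matrix (Fin m) (Fin m) ℂ) :
    Matrix (Fin m × Fin n) (Fin m × Fin n) ℂ :=
  ∑ i : Fin n, ∑ j : Fin n, (Φ (Matrix.single i j 1)) ⊗ₖ (Matrix.single i j 1)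

/-- vec mapping. -/
def vecM {n : ℕ} (A : Matrix (Fin n) (Fin n) ℂ) : Fin n × Fin n → ℂ := fun p => A p.1 p.2

section AuxStmt6
open Polynomial
open scoped MatrixOrder

lemma Matrix.PosSemidef.sqrt_eq_cfc_sqrt {ι : Type*} [Fintype ι] [DecidableEq ι]
    {M : Matrix ι ι ℂ} (hM : M.PosSemidef) : hM.sqrt = CFC.sqrt M := by
  rw [CFC.sqrt_eq_cfc, cfc_nnreal_eq_real _ M hM.nonneg, hM.1.cfc_eq, IsHermitian.cfc,
    Unitary.conjStarAlgAut_apply]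
  unfold Matrix.PosSemidef.sqrt
  congr 2
  congr 1
  funext i
  simp [Real.coe_sqrt, Real.coe_toNNReal', max_eq_left (hM.eigenvalues_nonneg i)]

lemma Matrix.PosSemidef.posSemidef_sqrt {ι : Type*} [Fintype ι] [DecidableEq ι]
    {M : Matrix ι ι ℂ} (hM : M.PosSemidef) : hM.sqrt.PosSemidef := by
  rw [hM.sqrt_eq_cfc_sqrt]
  exact (CFC.sqrt_nonneg M).posSemidef

lemma Matrix.PosSemidef.sqrt_mul_self {ι : Type*} [Fintype ι] [DecidableEq ι]
    {M : Matrix ι ι ℂ} (hM : M.PosSemidef) : hM.sqrt * hM.sqrt = M := by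
  rw [hM.sqrt_eq_cfc_sqrt]
  exact CFC.sqrt_mul_sqrt_self M hM.nonneg

lemma Matrix.PosSemidef.sq_sqrt {ι : Type*} [Fintype ι] [DecidableEq ι]
    {M : Matrix ι ι ℂ} (hM : M.PosSemidef) : hM.sqrt ^ 2 = M := by
  rw [pow_two, hM.sqrt_mul_self]

lemma Matrix.PosSemidef.eq_sqrt_of_sq_eq {ι : Type*} [Fintype ι] [DecidableEq ι]
    {B M : Matrix ι ι ℂ} (hB : B.PosSemidef) (hM : M.PosSemidef) (h : B ^ 2 = M) :
    B = hM.sqrt := by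
  rw [hM.sqrt_eq_cfc_sqrt]
  exact (CFC.sqrt_unique (by rw [← pow_two, h]) hB.nonneg).symm

lemma trace_sqrt_eq {ι : Type*} [Fintype ι] [DecidableEq ι] {M : Matrix ι ι ℂ}
    (hM : M.PosSemidef) :
    hM.sqrt.trace = ∑ i, (Real.sqrt (hM.1.eigenvalues i) : ℂ) := by
  unfold Matrix.PosSemidef.sqrt
  rw [Matrix.trace_mul_cycle]
  rw [Matrix.mem_unitaryGroup_iff'.mp (hM.1.eigenvectorUnitary).2, one_mul,
    Matrix.trace_diagonal]
  rfl

lemma det_smul_one_sub {ι : Type*} [Fintype ι] [DecidableEq ι] {M : Matrix ι ι ℂ}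
    (hM : M.IsHermitian) (x : ℂ) :
    (x • (1 : Matrix ι ι ℂ) - M).det = ∏ i, (x - (hM.eigenvalues i : ℂ)) := by
  set W : Matrix ι ι ℂ := (hM.eigenvectorUnitary : Matrix ι ι ℂ) with hW
  have hWW : W * star W = 1 := Matrix.mem_unitaryGroup_iff.mp hM.eigenvectorUnitary.2
  have hWW' : star W * W = 1 := Matrix.mem_unitaryGroup_iff'.mp hM.eigenvectorUnitary.2
  have key : x • (1 : Matrix ι ι ℂ) - M
      = W * (x • (1 : Matrix ι ι ℂ) - diagonal (RCLike.ofReal ∘ hM.eigenvalues)) * star W := by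
    rw [Matrix.mul_sub, Matrix.sub_mul, Matrix.mul_smul, mul_one, Matrix.smul_mul, hWW]
    congr 1
    rw [hW]
    exact hM.spectral_theorem
  rw [key, det_mul, det_mul, mul_comm, ← mul_assoc, ← det_mul, hWW', det_one, one_mul]
  have : x • (1 : Matrix ι ι ℂ) - diagonal (RCLike.ofReal ∘ hM.eigenvalues)
      = diagonal (fun i => x - (hM.eigenvalues i : ℂ)) := by
    ext i j
    by_cases h : i = j <;> simp [h, Matrix.one_apply, Function.comp]
  rw [this, det_diagonal]

-- the polynomial/multiset identity
lemma sqrt_eigsum_comm {ι κ : Type} [Fintype ι] [Fintype κ] [DecidableEq ι] [DecidableEq κ]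
    (A : Matrix ι κ ℂ) :
    ∑ i, Real.sqrt ((Matrix.posSemidef_conjTranspose_mul_self A).1.eigenvalues i)
      = ∑ j, Real.sqrt ((Matrix.posSemidef_self_mul_conjTranspose A).1.eigenvalues j) := by
  set d := (Matrix.posSemidef_conjTranspose_mul_self A).1.eigenvalues with hd
  set e := (Matrix.posSemidef_self_mul_conjTranspose A).1.eigenvalues with he
  -- determinant identity for x ≠ 0
  have hdet : ∀ x : ℂ, x ≠ 0 →
      (∏ i, (x - (d i : ℂ))) * x ^ (Fintype.card ι)
        = (∏ j, (x - (e j : ℂ))) * x ^ (Fintype.card κ) := by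
    intro x hx
    rw [← det_smul_one_sub, ← det_smul_one_sub]
    have h1 : x • (1 : Matrix κ κ ℂ) - Aᴴ * A
        = x • ((1 : Matrix κ κ ℂ) + Aᴴ * (-(x⁻¹ • A))) := by
      rw [smul_add, Matrix.mul_neg, Matrix.mul_smul, smul_neg, smul_smul,
        mul_inv_cancel₀ hx, one_smul, ← sub_eq_add_neg]
    have h2 : x • (1 : Matrix ι ι ℂ) - A * Aᴴ
        = x • ((1 : Matrix ι ι ℂ) + (-(x⁻¹ • A)) * Aᴴ) := by
      rw [smul_add, Matrix.neg_mul, Matrix.smul_mul, smul_neg, smul_smul,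
        mul_inv_cancel₀ hx, one_smul, ← sub_eq_add_neg]
    rw [h1, h2, det_smul, det_smul, Matrix.det_one_add_mul_comm]
    ring
  -- polynomial identity
  set p : ℂ[X] := (∏ i, (X - C ((d i : ℂ)))) * X ^ (Fintype.card ι) with hp
  set q : ℂ[X] := (∏ j, (X - C ((e j : ℂ)))) * X ^ (Fintype.card κ) with hq
  have hpq : p = q := by
    apply eq_of_infinite_eval_eq
    apply Set.Infinite.mono (s := {x : ℂ | x ≠ 0})
    · intro x hx
      simp only [Set.mem_setOf_eq, hp, hq, eval_mul, eval_pow, eval_X, eval_prod, eval_sub,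
        eval_C]
      exact hdet x hx
    · exact Set.Finite.infinite_compl (Set.finite_singleton (0 : ℂ))
  -- roots
  have hroots : (Finset.univ.val.map (fun i => (d i : ℂ)))
        + (Fintype.card ι) • ({0} : Multiset ℂ)
      = (Finset.univ.val.map (fun j => (e j : ℂ)))
        + (Fintype.card κ) • ({0} : Multiset ℂ) := by
    have hr : ∀ (γ : Type) [Fintype γ] (f : γ → ℝ) (k : ℕ),
        (((∏ i, (X - C ((f i : ℂ)))) * X ^ k).roots)
          = (Finset.univ.val.map (fun i => (f i : ℂ))) + k • ({0} : Multiset ℂ) := by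
      intro γ _ f k
      have hmono : (∏ i, (X - C ((f i : ℂ)))).Monic :=
        monic_prod_of_monic _ _ (fun i _ => monic_X_sub_C _)
      rw [roots_mul (mul_ne_zero hmono.ne_zero (pow_ne_zero _ X_ne_zero)), roots_X_pow]
      congr 1
      have : (∏ i, (X - C ((f i : ℂ)))) =
          ((Finset.univ.val.map (fun i => (f i : ℂ))).map (fun a => X - C a)).prod := by
        rw [Multiset.map_map]; rfl
      rw [this, roots_multiset_prod_X_sub_C]
    have := hpq
    rw [hp, hq] at this
    have h1 := hr κ d (Fintype.card ι)
    have h2 := hr ι e (Fintype.card κ)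
    rw [← h1, ← h2, this]
  -- sum the function √(re ·)
  have hsum := congrArg (fun s : Multiset ℂ => ((s.map (fun z => Real.sqrt z.re)).sum)) hroots
  simp only [Multiset.map_add, Multiset.sum_add, Multiset.map_map, Multiset.map_nsmul,
    Multiset.sum_nsmul, Function.comp] at hsum
  simp only [Multiset.map_singleton, Multiset.sum_singleton, Complex.zero_re,
    Real.sqrt_zero, smul_zero, add_zero] at hsum
  have hfix : ∀ (γ : Type) (f : γ → ℝ),
      (fun i => Real.sqrt ((f i : ℂ)).re) = fun i => Real.sqrt (f i) := by
    intro γ f; funext i; rw [Complex.ofReal_re]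
  rw [hfix κ d, hfix ι e] at hsum
  exact hsum

lemma trace_sqrt_comm {ι κ : Type} [Fintype ι] [Fintype κ] [DecidableEq ι] [DecidableEq κ]
    (A : Matrix ι κ ℂ) :
    (Matrix.posSemidef_conjTranspose_mul_self A).sqrt.trace
      = (Matrix.posSemidef_self_mul_conjTranspose A).sqrt.trace := by
  rw [trace_sqrt_eq, trace_sqrt_eq]
  push_cast
  exact_mod_cast congrArg (Complex.ofReal) (sqrt_eigsum_comm A)

lemma sqrt_congr' {ι : Type*} [Fintype ι] [DecidableEq ι] {M N : Matrix ι ι ℂ}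
    (hM : M.PosSemidef) (hN : N.PosSemidef) (h : M = N) : hM.sqrt = hN.sqrt := by
  subst h; rfl

lemma trace_sqrt_transpose' {ι : Type*} [Fintype ι] [DecidableEq ι] {M : Matrix ι ι ℂ}
    (hM : M.PosSemidef) : (hM.transpose).sqrt.trace = hM.sqrt.trace := by
  have h : hM.transpose.sqrt = (hM.sqrt)ᵀ := by
    refine (Matrix.PosSemidef.eq_sqrt_of_sq_eq hM.posSemidef_sqrt.transpose hM.transpose ?_).symm
    rw [pow_two, ← Matrix.transpose_mul, hM.sqrt_mul_self]
  rw [h, Matrix.trace_transpose]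


end AuxStmt6

/-- fidelity of reduced states equals a trace norm of a partial trace. -/
theorem stmt6 {n m : ℕ} (u v : Fin n × Fin m → ℂ)
    (hu : ∑ p, ‖u p‖ ^ 2 = 1) (hv : ∑ p, ‖v p‖ ^ 2 = 1) :
    fid (ptraceRight (Matrix.vecMulVec u (star u))) (ptraceRight (Matrix.vecMulVec v (star v)))
      = traceNorm (ptraceLeft (Matrix.vecMulVec v (star u))) := by
  classical
  set U : Matrix (Fin n) (Fin m) ℂ := Matrix.of fun i s => u (i, s) with hUdef
  set V : Matrix (Fin n) (Fin m) ℂ := Matrix.of fun i s => v (i, s) with hVdef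
  have hPu : ptraceRight (Matrix.vecMulVec u (star u)) = U * Uᴴ := by
    ext i j
    simp [ptraceRight, Matrix.vecMulVec_apply, Matrix.mul_apply, Matrix.conjTranspose_apply,
      hUdef]
  have hPv : ptraceRight (Matrix.vecMulVec v (star v)) = V * Vᴴ := by
    ext i j
    simp [ptraceRight, Matrix.vecMulVec_apply, Matrix.mul_apply, Matrix.conjTranspose_apply,
      hVdef]
  have hP : (U * Uᴴ).PosSemidef := Matrix.posSemidef_self_mul_conjTranspose U
  have hQ : (V * Vᴴ).PosSemidef := Matrix.posSemidef_self_mul_conjTranspose V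
  set S := hP.sqrt with hSdef
  set T := hQ.sqrt with hTdef
  have hmsP : msqrt (U * Uᴴ) = S := by rw [msqrt, dif_pos hP]
  have hmsQ : msqrt (V * Vᴴ) = T := by rw [msqrt, dif_pos hQ]
  -- LHS
  rw [fid, hPu, hPv, hmsP, hmsQ]
  set N := ptraceLeft (Matrix.vecMulVec v (star u)) with hNdef
  set B := Vᴴ * U with hBdef
  -- key matrix identities
  have hS : Sᴴ = S := hP.posSemidef_sqrt.1
  have hT : Tᴴ = T := hQ.posSemidef_sqrt.1
  have key1 : (S * T)ᴴ * (S * T) = (Uᴴ * T)ᴴ * (Uᴴ * T) := by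
    rw [Matrix.conjTranspose_mul, Matrix.conjTranspose_mul, hS, hT,
      Matrix.conjTranspose_conjTranspose]
    calc T * S * (S * T) = T * (S * S) * T := by simp only [Matrix.mul_assoc]
      _ = T * (U * Uᴴ) * T := by rw [hP.sqrt_mul_self]
      _ = T * U * (Uᴴ * T) := by simp only [Matrix.mul_assoc]
  have key2 : (Uᴴ * T) * (Uᴴ * T)ᴴ = Bᴴ * B := by
    rw [Matrix.conjTranspose_mul, Matrix.conjTranspose_conjTranspose, hT, hBdef,
      Matrix.conjTranspose_mul, Matrix.conjTranspose_conjTranspose]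
    calc Uᴴ * T * (T * U) = Uᴴ * (T * T) * U := by simp only [Matrix.mul_assoc]
      _ = Uᴴ * (V * Vᴴ) * U := by rw [← pow_two, hQ.sq_sqrt]
      _ = Uᴴ * V * (Vᴴ * U) := by simp only [Matrix.mul_assoc]
  have key3 : Nᴴ * N = (Bᴴ * B)ᵀ := by
    ext s t
    simp only [hNdef, hBdef, ptraceLeft, Matrix.mul_apply, Matrix.conjTranspose_apply,
      Matrix.transpose_apply, Matrix.vecMulVec_apply, Matrix.of_apply, Pi.star_apply,
      star_sum, star_mul', star_star, hUdef, hVdef]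
    refine Finset.sum_congr rfl fun r _ => ?_
    rw [mul_comm]
  -- chain
  have lhs_eq : traceNorm (S * T) = traceNorm B := by
    rw [traceNorm, traceNorm]
    congr 1
    calc (Matrix.posSemidef_conjTranspose_mul_self (S * T)).sqrt.trace
        = (Matrix.posSemidef_conjTranspose_mul_self (Uᴴ * T)).sqrt.trace := by
          rw [sqrt_congr' (Matrix.posSemidef_conjTranspose_mul_self (S * T))
            (Matrix.posSemidef_conjTranspose_mul_self (Uᴴ * T)) key1]
      _ = (Matrix.posSemidef_self_mul_conjTranspose (Uᴴ * T)).sqrt.trace := trace_sqrt_comm _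
      _ = (Matrix.posSemidef_conjTranspose_mul_self B).sqrt.trace := by
          rw [sqrt_congr' (Matrix.posSemidef_self_mul_conjTranspose (Uᴴ * T))
            (Matrix.posSemidef_conjTranspose_mul_self B) key2]
  have rhs_eq : traceNorm N = traceNorm B := by
    rw [traceNorm, traceNorm]
    have hBB := Matrix.posSemidef_conjTranspose_mul_self B
    rw [sqrt_congr' (Matrix.posSemidef_conjTranspose_mul_self N) hBB.transpose key3,
      trace_sqrt_transpose' hBB]
  rw [lhs_eq, rhs_eq]
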